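/- In the abstract framework with a fixed computable enumeration g : Ω → D of all of D (where Ω represents the relevant time), every semidecidable class is computably enumerable; conversely, if D itself is computably enumerable then every semidecidable class with a computable surjection from D onto it is computably enumerable. Hence 'D is computably enumerable' is equivalent to 'every semidecidable class is computably enumerable'. -/

import Mathlib

/-- Abstract form of Proposition 12. `C` is the class of computable partial functions
on `D`, closed under composition; `Ω ⊆ D` represents the relevant time, and a class
`A` is computably enumerable if `A = {h(w) : w ∈ Ω}` for some `h ∈ C`. Assume that
every semidecidable class is the range of a computable function, and that `D` itself
is semidecidable. Then `D` is computably enumerable if and only if every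
semidecidable class is computably enumerable. -/
theorem D_ce_iff_every_semidecidable_ce {D : Type*}
    (C : Set (D →. D)) (Ω : Set D) (zero : D)
    (hcomp : ∀ f ∈ C, ∀ g ∈ C, f.comp g ∈ C)
    (hrange : ∀ A : Set D,
      ((fun w => Part.assert (w ∈ A) fun _ => Part.some zero : D →. D) ∈ C) →
      ∃ f ∈ C, PFun.ran f = A)
    (hDsemi :
      ((fun w => Part.assert (w ∈ (Set.univ : Set D)) fun _ => Part.some zero : D →. D) ∈ C)) :
    (∃ h ∈ C, PFun.image h Ω = Set.univ) ↔
      ∀ A : Set D,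
        ((fun w => Part.assert (w ∈ A) fun _ => Part.some zero : D →. D) ∈ C) →
        ∃ h ∈ C, PFun.image h Ω = A := by
  constructor
  · rintro ⟨h, hC, hIm⟩ A hA
    obtain ⟨f, fC, fran⟩ := hrange A hA
    refine ⟨f.comp h, hcomp f fC h hC, ?_⟩
    ext y
    simp only [PFun.mem_image, PFun.comp_apply, Part.mem_bind_iff (g := (f : D → Part D))]
    constructor
    · rintro ⟨w, hw, b, hb, hy⟩
      exact fran ▸ ⟨b, hy⟩
    · intro hy
      obtain ⟨b, hb⟩ := (fran ▸ hy : y ∈ f.ran)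
      have : b ∈ PFun.image h Ω := hIm ▸ Set.mem_univ b
      obtain ⟨w, hw, hwb⟩ := (PFun.mem_image h b Ω).mp this
      exact ⟨w, hw, b, hwb, hb⟩
  · intro H
    exact H Set.univ hDsemi
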